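/- arXiv:1308.3026 — 2 statements merged into one kernel-verified Lean document; each statement's English description precedes it below -/
import Mathlib

section
/- Let A be a diagonalizable derivation of the Heisenberg algebra 𝓗_n with positive eigenvalues α_1 < ⋯ < α_{k+1} and eigenspaces U_1, …, U_{k+1}. Then the eigenspace U_{k+1} of the largest eigenvalue equals the center 𝓩(𝓗_n) of 𝓗_n; in particular dim U_{k+1} = 1. -/
open scoped BigOperators RealInnerProductSpace ENNReal
open Module Filter

noncomputable section

/-- The underlying space of the `n`-th Heisenberg group/algebra: `ℝ^{2n+1}`
with a fixed inner product. -/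
abbrev HV (n : ℕ) : Type := EuclideanSpace ℝ (Fin (2 * n + 1))

/-- `br` is a Heisenberg Lie bracket on `ℝ^{2n+1}`: with respect to some basis
`b`, the only nontrivial bracket relations are `[b_{2s}, b_{2s+1}] = b_{2n}` (0-indexed). -/
def IsHeisenbergBracket (n : ℕ) (br : HV n →ₗ[ℝ] HV n →ₗ[ℝ] HV n) : Prop :=
  ∃ b : Basis (Fin (2 * n + 1)) ℝ (HV n),
    ∀ i j : Fin (2 * n + 1),
      br (b i) (b j) =
        (if (i : ℕ) % 2 = 0 ∧ (j : ℕ) = (i : ℕ) + 1 ∧ (i : ℕ) < 2 * n then (1 : ℝ)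
         else if (j : ℕ) % 2 = 0 ∧ (i : ℕ) = (j : ℕ) + 1 ∧ (j : ℕ) < 2 * n then (-1 : ℝ)
         else 0) • b ⟨2 * n, by omega⟩

/-- `A` is a derivation of the Lie algebra `(ℝ^{2n+1}, br)`. -/
def IsDerivation {n : ℕ} (br : HV n →ₗ[ℝ] HV n →ₗ[ℝ] HV n)
    (A : HV n →ₗ[ℝ] HV n) : Prop :=
  ∀ x y, A (br x y) = br (A x) y + br x (A y)

/-- The group product `x * y = x + y + (1/2)[x,y]` (BCH formula). -/
def hMul {n : ℕ} (br : HV n →ₗ[ℝ] HV n →ₗ[ℝ] HV n) (x y : HV n) : HV n :=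
  x + y + (2⁻¹ : ℝ) • br x y

/-- The left coset `g * S`. -/
def leftCoset {n : ℕ} (br : HV n →ₗ[ℝ] HV n →ₗ[ℝ] HV n) (g : HV n)
    (S : Set (HV n)) : Set (HV n) :=
  hMul br g '' S

/-- `‖x‖_A = Σ_i |x_i|^{1/α_i}`, where `x_i` is the component of `x` in the
eigenspace `U i` (computed as the orthogonal projection; the eigenspaces are
assumed mutually orthogonal with sum everything). -/
def normA {n k : ℕ} (α : Fin (k + 1) → ℝ) (U : Fin (k + 1) → Submodule ℝ (HV n))
    (x : HV n) : ℝ :=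
  ∑ i, ‖(Submodule.orthogonalProjectionOnto (U i) x : HV n)‖ ^ (α i)⁻¹

/-- The parabolic visual quasimetric `d_A(p,q) = ‖(-p) * q‖_A`. -/
def qd {n k : ℕ} (br : HV n →ₗ[ℝ] HV n →ₗ[ℝ] HV n) (α : Fin (k + 1) → ℝ)
    (U : Fin (k + 1) → Submodule ℝ (HV n)) (p q : HV n) : ℝ :=
  normA α U (hMul br (-p) q)

/-- `η` is a homeomorphism of `[0,∞)` onto itself. -/
def IsHomeoOfNonneg (η : ℝ → ℝ) : Prop :=
  η 0 = 0 ∧ StrictMonoOn η (Set.Ici 0) ∧ ContinuousOn η (Set.Ici 0) ∧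
    ∀ s : ℝ, 0 ≤ s → ∃ t : ℝ, 0 ≤ t ∧ η t = s

/-- `F` is an `η`-quasisymmetry from `(X, d1)` to `(X, d2)`. -/
def IsQS {X : Type*} (d1 d2 : X → X → ℝ) (η : ℝ → ℝ) (F : X → X) : Prop :=
  Function.Bijective F ∧
    ∀ x y z : X, x ≠ y → y ≠ z → x ≠ z →
      d2 (F x) (F y) / d2 (F x) (F z) ≤ η (d1 x y / d1 x z)

/-- `L_F(x,r) = sup { d2(F x, F x') : d1(x,x') ≤ r }`. -/
def LFr {X : Type*} (d1 d2 : X → X → ℝ) (F : X → X) (x : X) (r : ℝ) : ℝ≥0∞ :=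
  ⨆ (x' : X) (_ : d1 x x' ≤ r), ENNReal.ofReal (d2 (F x) (F x'))

/-- `l_F(x,r) = inf { d2(F x, F x') : d1(x,x') ≥ r }`. -/
def lFr {X : Type*} (d1 d2 : X → X → ℝ) (F : X → X) (x : X) (r : ℝ) : ℝ≥0∞ :=
  ⨅ (x' : X) (_ : r ≤ d1 x x'), ENNReal.ofReal (d2 (F x) (F x'))

/-- `L_F(x) = limsup_{r→0⁺} L_F(x,r)/r`. -/
def LF {X : Type*} (d1 d2 : X → X → ℝ) (F : X → X) (x : X) : ℝ≥0∞ :=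
  Filter.limsup (fun r : ℝ => LFr d1 d2 F x r / ENNReal.ofReal r) (nhdsWithin 0 (Set.Ioi 0))

/-- `l_F(x) = liminf_{r→0⁺} l_F(x,r)/r`. -/
def lF {X : Type*} (d1 d2 : X → X → ℝ) (F : X → X) (x : X) : ℝ≥0∞ :=
  Filter.liminf (fun r : ℝ => lFr d1 d2 F x r / ENNReal.ofReal r) (nhdsWithin 0 (Set.Ioi 0))

theorem stmt0
    (n k : ℕ) (hn : 1 ≤ n) (hk : 1 ≤ k)
    (br : HV n →ₗ[ℝ] HV n →ₗ[ℝ] HV n) (hbr : IsHeisenbergBracket n br)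
    (A : HV n →ₗ[ℝ] HV n) (hA : IsDerivation br A)
    (α : Fin (k + 1) → ℝ) (hαmono : StrictMono α) (hαpos : ∀ i, 0 < α i)
    (U : Fin (k + 1) → Submodule ℝ (HV n))
    (hU : ∀ i, U i = Module.End.eigenspace A (α i))
    (hUne : ∀ i, U i ≠ ⊥) (hUspan : (⨆ i, U i) = ⊤) :
    ((U (Fin.last k) : Set (HV n)) = {z : HV n | ∀ x : HV n, br z x = 0}) ∧
      Module.finrank ℝ (U (Fin.last k)) = 1 := by
  classical
  obtain ⟨b, hb⟩ := hbr
  set ω : Fin (2 * n + 1) := ⟨2 * n, by omega⟩ with hωdef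
  have hωval : (ω : ℕ) = 2 * n := rfl
  -- b ω is central
  have hbω : ∀ j, br (b ω) (b j) = 0 := by
    intro j
    rw [hb]
    have h1 : ¬((ω : ℕ) % 2 = 0 ∧ (j : ℕ) = (ω : ℕ) + 1 ∧ (ω : ℕ) < 2 * n) := by
      rw [hωval]; omega
    have h2 : ¬((j : ℕ) % 2 = 0 ∧ (ω : ℕ) = (j : ℕ) + 1 ∧ (j : ℕ) < 2 * n) := by
      rw [hωval]; omega
    rw [if_neg h1, if_neg h2, zero_smul]
  have hbω0 : br (b ω) = 0 := b.ext fun j => by simp [hbω j]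
  -- coefficient extraction for central elements
  have hrepr : ∀ (z : HV n), br z = 0 → ∀ m : Fin (2 * n + 1), (m : ℕ) ≠ 2 * n →
      b.repr z m = 0 := by
    intro z hz m hm
    have hmlt : (m : ℕ) < 2 * n := by have := m.isLt; omega
    have hexp : ∀ j : Fin (2 * n + 1), br z (b j) = ∑ i, (b.repr z i) • (br (b i) (b j)) := by
      intro j
      conv_lhs => rw [← b.sum_repr z]
      simp only [map_sum, map_smul, LinearMap.sum_apply, LinearMap.smul_apply]
    rcases Nat.even_or_odd (m : ℕ) with he | ho
    · have hm2 : (m : ℕ) % 2 = 0 := Nat.even_iff.mp he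
      set j : Fin (2 * n + 1) := ⟨(m : ℕ) + 1, by omega⟩ with hjdef
      have hjval : (j : ℕ) = (m : ℕ) + 1 := rfl
      have hzj : br z (b j) = 0 := by rw [hz]; rfl
      have hsum : br z (b j) = (b.repr z m) • b ω := by
        rw [hexp j, Finset.sum_eq_single m]
        · rw [hb, if_pos ⟨hm2, hjval, hmlt⟩, one_smul]
        · intro i _ hi
          have hiv : (i : ℕ) ≠ (m : ℕ) := fun h => hi (Fin.ext h)
          rw [hb]
          rw [if_neg (by omega), if_neg (by omega), zero_smul, smul_zero]
        · intro h; exact absurd (Finset.mem_univ m) h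
      rcases smul_eq_zero.mp (hsum.symm.trans hzj) with h | h
      · exact h
      · exact absurd h (b.ne_zero ω)
    · have hm2 : (m : ℕ) % 2 = 1 := Nat.odd_iff.mp ho
      set j : Fin (2 * n + 1) := ⟨(m : ℕ) - 1, by omega⟩ with hjdef
      have hjval : (j : ℕ) = (m : ℕ) - 1 := rfl
      have hzj : br z (b j) = 0 := by rw [hz]; rfl
      have hsum : br z (b j) = (b.repr z m) • ((-1 : ℝ) • b ω) := by
        rw [hexp j, Finset.sum_eq_single m]
        · rw [hb, if_neg (by omega), if_pos ⟨by omega, by omega, by omega⟩]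
        · intro i _ hi
          have hiv : (i : ℕ) ≠ (m : ℕ) := fun h => hi (Fin.ext h)
          rw [hb]
          rw [if_neg (by omega), if_neg (by omega), zero_smul, smul_zero]
        · intro h; exact absurd (Finset.mem_univ m) h
      rcases smul_eq_zero.mp (hsum.symm.trans hzj) with h | h
      · exact h
      · exfalso
        rw [neg_smul, one_smul, neg_eq_zero] at h
        exact b.ne_zero ω h
  -- the center as a submodule
  set Z : Submodule ℝ (HV n) := LinearMap.ker br with hZdef
  have hZmem : ∀ z, z ∈ Z ↔ ∀ x, br z x = 0 := by
    intro z
    rw [hZdef, LinearMap.mem_ker, LinearMap.ext_iff]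
    simp
  have hbωZ : b ω ∈ Z := LinearMap.mem_ker.mpr hbω0
  have hZspan : Z = Submodule.span ℝ {b ω} := by
    apply le_antisymm
    · intro z hz
      have hz' : br z = 0 := LinearMap.mem_ker.mp hz
      have hdecomp : z = b.repr z ω • b ω := by
        conv_lhs => rw [← b.sum_repr z]
        exact Finset.sum_eq_single ω
          (fun i _ hi => by
            rw [hrepr z hz' i (fun h => hi (Fin.ext h)), zero_smul])
          (fun h => absurd (Finset.mem_univ ω) h)
      rw [hdecomp]
      exact Submodule.smul_mem _ _ (Submodule.mem_span_singleton_self _)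
    · rw [Submodule.span_le, Set.singleton_subset_iff]
      exact hbωZ
  have hZrank : Module.finrank ℝ Z = 1 := by
    rw [hZspan]
    exact finrank_span_singleton (b.ne_zero ω)
  -- eigenspaces of values that are not among the α i are trivial
  have heigbot : ∀ μ : ℝ, (∀ i, α i ≠ μ) → Module.End.eigenspace A μ = ⊥ := by
    intro μ hμ
    have hind := Module.End.eigenspaces_iSupIndep A
    have hdisj : Disjoint (Module.End.eigenspace A μ)
        (⨆ (ν : ℝ) (_ : ν ≠ μ), Module.End.eigenspace A ν) := hind μ
    have hle : Module.End.eigenspace A μ ≤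
        ⨆ (ν : ℝ) (_ : ν ≠ μ), Module.End.eigenspace A ν := by
      calc Module.End.eigenspace A μ ≤ ⊤ := le_top
        _ = ⨆ i, U i := hUspan.symm
        _ ≤ _ := by
            apply iSup_le
            intro i
            rw [hU i]
            exact le_iSup₂_of_le (α i) (hμ i) le_rfl
    exact le_bot_iff.mp (hdisj le_rfl hle)
  -- the top eigenspace lies in the center
  have hUlastZ : U (Fin.last k) ≤ Z := by
    intro x hx
    rw [hU] at hx
    have hAx : A x = α (Fin.last k) • x := Module.End.mem_eigenspace_iff.mp hx
    refine (hZmem x).mpr ?_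
    intro y
    have hy : y ∈ (⨆ i, U i) := by rw [hUspan]; trivial
    refine Submodule.iSup_induction (motive := fun y => br x y = 0) U hy ?_ ?_ ?_
    · intro i z hzU
      have hAz : A z = α i • z :=
        Module.End.mem_eigenspace_iff.mp (by rw [← hU]; exact hzU)
      by_cases hz0 : br x z = 0
      · exact hz0
      exfalso
      have hmem : br x z ∈ Module.End.eigenspace A (α (Fin.last k) + α i) := by
        rw [Module.End.mem_eigenspace_iff]
        rw [hA x z, hAx, hAz, map_smul, map_smul, LinearMap.smul_apply, add_smul]
      have hbot : Module.End.eigenspace A (α (Fin.last k) + α i) = ⊥ := by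
        apply heigbot
        intro i'
        have h1 : α i' ≤ α (Fin.last k) := hαmono.le_iff_le.mpr (Fin.le_last i')
        have h2 : 0 < α i := hαpos i
        intro hcontra
        linarith [hcontra]
      rw [hbot, Submodule.mem_bot] at hmem
      exact hz0 hmem
    · exact map_zero (br x)
    · intro u v hu hv
      rw [map_add, hu, hv, add_zero]
  have hUlast_eq : U (Fin.last k) = Z := by
    apply Submodule.eq_of_le_of_finrank_eq hUlastZ
    rw [hZrank]
    have h1 : 0 < Module.finrank ℝ (U (Fin.last k)) :=
      Module.finrank_pos_iff.mpr (Submodule.nontrivial_iff_ne_bot.mpr (hUne _))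
    have h2 : Module.finrank ℝ (U (Fin.last k)) ≤ Module.finrank ℝ Z :=
      Submodule.finrank_mono hUlastZ
    omega
  constructor
  · rw [hUlast_eq]
    ext z
    simpa using hZmem z
  · rw [hUlast_eq, hZrank]
end
end

section
/- Let A be a diagonalizable derivation of the Heisenberg algebra 𝓗_n with positive eigenvalues α_1 < ⋯ < α_{k+1} and eigenspaces U_1, …, U_{k+1}, and fix a nonzero vector e ∈ U_{k+1}. For every i with 2i < k+1, writing m_i = dim U_i, one has dim U_{k+1−i} = m_i and there exist a basis e_1, …, e_{m_i} of U_i and a basis η_1, …, η_{m_i} of U_{k+1−i} such that [e_s, η_t] = δ_{st}·e for all 1 ≤ s, t ≤ m_i. -/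
open scoped BigOperators RealInnerProductSpace ENNReal
open Module Filter

noncomputable section

set_option maxHeartbeats 1000000 in
theorem stmt4
    (n k : ℕ) (hn : 1 ≤ n) (hk : 1 ≤ k)
    (br : HV n →ₗ[ℝ] HV n →ₗ[ℝ] HV n) (hbr : IsHeisenbergBracket n br)
    (A : HV n →ₗ[ℝ] HV n) (hA : IsDerivation br A)
    (α : Fin (k + 1) → ℝ) (hαmono : StrictMono α) (hαpos : ∀ i, 0 < α i)
    (U : Fin (k + 1) → Submodule ℝ (HV n))
    (hU : ∀ i, U i = Module.End.eigenspace A (α i))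
    (hUne : ∀ i, U i ≠ ⊥) (hUspan : (⨆ i, U i) = ⊤)
    (e : HV n) (he : e ∈ U (Fin.last k)) (hene : e ≠ 0) :
    ∀ i j : Fin (k + 1), (i : ℕ) + (j : ℕ) + 2 = k + 1 → 2 * ((i : ℕ) + 1) < k + 1 →
      Module.finrank ℝ (U j) = Module.finrank ℝ (U i) ∧
      ∃ v w : Fin (Module.finrank ℝ (U i)) → HV n,
        (∀ s, v s ∈ U i) ∧ (∀ s, w s ∈ U j) ∧
        LinearIndependent ℝ v ∧ Submodule.span ℝ (Set.range v) = U i ∧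
        LinearIndependent ℝ w ∧ Submodule.span ℝ (Set.range w) = U j ∧
        ∀ s t, br (v s) (w t) = (if s = t then (1 : ℝ) else 0) • e := by
  classical
  obtain ⟨b, hb⟩ := hbr
  set z : HV n := b ⟨2 * n, by omega⟩ with hzdef
  have hzne : z ≠ 0 := b.ne_zero _
  set S : Submodule ℝ (HV n) := Submodule.span ℝ {z} with hSdef
  have hzS : z ∈ S := Submodule.mem_span_singleton_self z
  -- z is central
  have hzr : ∀ y, br z y = 0 := by
    have h : br z = (0 : HV n →ₗ[ℝ] HV n) := b.ext fun j => by
      rw [hzdef, hb]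
      have hj := j.isLt
      have hcoe : (if (2 * n) % 2 = 0 ∧ (j : ℕ) = 2 * n + 1 ∧ 2 * n < 2 * n then (1:ℝ)
          else if (j : ℕ) % 2 = 0 ∧ 2 * n = (j:ℕ) + 1 ∧ (j:ℕ) < 2 * n then (-1:ℝ) else 0) = 0 := by
        split_ifs with h1 h2
        · exfalso; omega
        · exfalso; omega
        · rfl
      rw [hcoe, zero_smul]; rfl
    intro y; rw [h]; rfl
  have hzl : ∀ y, br y z = 0 := by
    have h : br.flip z = (0 : HV n →ₗ[ℝ] HV n) := b.ext fun i => by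
      rw [LinearMap.flip_apply, hzdef, hb]
      have hi := i.isLt
      have hcoe : (if (i:ℕ) % 2 = 0 ∧ 2 * n = (i:ℕ) + 1 ∧ (i:ℕ) < 2 * n then (1:ℝ)
          else if (2 * n) % 2 = 0 ∧ (i:ℕ) = 2 * n + 1 ∧ 2 * n < 2 * n then (-1:ℝ) else 0) = 0 := by
        split_ifs with h1 h2
        · exfalso; omega
        · exfalso; omega
        · rfl
      rw [hcoe, zero_smul]; rfl
    intro y
    simpa only [LinearMap.flip_apply, LinearMap.zero_apply] using LinearMap.congr_fun h y
  -- all brackets lie in S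
  have hbS : ∀ x y, br x y ∈ S := by
    have h1 : ∀ (i : Fin (2*n+1)) (y : HV n), br (b i) y ∈ S := by
      intro i
      have hle : (⊤ : Submodule ℝ (HV n)) ≤ Submodule.comap (br (b i)) S := by
        rw [← b.span_eq]
        refine Submodule.span_le.mpr ?_
        rintro _ ⟨j, rfl⟩
        simp only [SetLike.mem_coe, Submodule.mem_comap, hb]
        exact S.smul_mem _ hzS
      exact fun y => hle Submodule.mem_top
    intro x y
    have hle : (⊤ : Submodule ℝ (HV n)) ≤ Submodule.comap (br.flip y) S := by
      rw [← b.span_eq]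
      refine Submodule.span_le.mpr ?_
      rintro _ ⟨i, rfl⟩
      simpa only [SetLike.mem_coe, Submodule.mem_comap, LinearMap.flip_apply] using h1 i y
    simpa only [Submodule.mem_comap, LinearMap.flip_apply] using hle Submodule.mem_top
  -- the coordinate functional
  set φ : HV n →ₗ[ℝ] ℝ := b.coord ⟨2 * n, by omega⟩ with hφdef
  have hφz : φ z = 1 := by
    rw [hφdef, hzdef]
    simp [Basis.coord_apply]
  have hrepS : ∀ u ∈ S, u = φ u • z := by
    intro u hu
    obtain ⟨a, rfl⟩ := Submodule.mem_span_singleton.mp hu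
    rw [map_smul, smul_eq_mul, hφz, mul_one]
  have hrep : ∀ x y, br x y = φ (br x y) • z := fun x y => hrepS _ (hbS x y)
  -- expansion of a bracket against a basis vector
  have hcomp : ∀ (x : HV n) (p : Fin (2*n+1)),
      br x (b p) = ∑ t, b.repr x t • br (b t) (b p) := by
    intro x p
    conv_lhs => rw [← b.sum_repr x]
    simp only [map_sum, LinearMap.sum_apply, map_smul, LinearMap.smul_apply]
  -- nondegeneracy: bracket-central elements lie in S
  have hnd : ∀ x : HV n, (∀ y, br x y = 0) → x ∈ S := by
    intro x hx
    have hcoef : ∀ s : Fin (2*n+1), (s : ℕ) ≠ 2*n → b.repr x s = 0 := by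
      intro s hs
      have hslt : (s : ℕ) < 2*n := by have := s.isLt; omega
      by_cases hpar : (s : ℕ) % 2 = 0
      · have hp : (s:ℕ)+1 < 2*n+1 := by omega
        have hpv : ((⟨(s:ℕ)+1, hp⟩ : Fin (2*n+1)) : ℕ) = (s:ℕ)+1 := rfl
        have h0 := hx (b ⟨(s:ℕ)+1, hp⟩)
        rw [hcomp x ⟨(s:ℕ)+1, hp⟩] at h0
        have hsum : ∑ t, b.repr x t • br (b t) (b ⟨(s:ℕ)+1, hp⟩)
            = b.repr x s • br (b s) (b ⟨(s:ℕ)+1, hp⟩) := by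
          refine Finset.sum_eq_single s ?_ ?_
          · intro t _ hts
            rw [hb]
            simp only [hpv]
            split_ifs with h1 h2
            · obtain ⟨-, h1b, -⟩ := h1
              exact absurd (Fin.ext (by omega : (t:ℕ) = (s:ℕ))) hts
            · exact absurd h2 (by omega)
            · rw [zero_smul, smul_zero]
          · intro h; exact absurd (Finset.mem_univ _) h
        rw [hsum, hb] at h0
        simp only [hpv] at h0
        rw [if_pos ⟨hpar, by simp, hslt⟩, one_smul] at h0
        exact (smul_eq_zero.mp h0).resolve_right hzne
      · have hp : (s:ℕ)-1 < 2*n+1 := by omega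
        have hpv : ((⟨(s:ℕ)-1, hp⟩ : Fin (2*n+1)) : ℕ) = (s:ℕ)-1 := rfl
        have h0 := hx (b ⟨(s:ℕ)-1, hp⟩)
        rw [hcomp x ⟨(s:ℕ)-1, hp⟩] at h0
        have hsum : ∑ t, b.repr x t • br (b t) (b ⟨(s:ℕ)-1, hp⟩)
            = b.repr x s • br (b s) (b ⟨(s:ℕ)-1, hp⟩) := by
          refine Finset.sum_eq_single s ?_ ?_
          · intro t _ hts
            rw [hb]
            simp only [hpv]
            split_ifs with h1 h2
            · exact absurd h1 (by omega)
            · obtain ⟨-, h2b, -⟩ := h2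
              exact absurd (Fin.ext (by omega : (t:ℕ) = (s:ℕ))) hts
            · rw [zero_smul, smul_zero]
          · intro h; exact absurd (Finset.mem_univ _) h
        rw [hsum, hb] at h0
        simp only [hpv] at h0
        rw [if_neg (by omega), if_pos ⟨by omega, by omega, by omega⟩] at h0
        have h1 : b.repr x s • ((-1:ℝ) • z) = 0 := h0
        rw [smul_smul] at h1
        rcases smul_eq_zero.mp h1 with h2 | h2
        · have : b.repr x s = 0 := by linarith [h2]
          exact this
        · exact absurd h2 hzne
    have hxz : x = b.repr x ⟨2*n, by omega⟩ • z := by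
      conv_lhs => rw [← b.sum_repr x]
      rw [Finset.sum_eq_single (⟨2*n, by omega⟩ : Fin (2*n+1))
        (fun t _ hts => by rw [hcoef t (fun h => hts (Fin.ext h)), zero_smul])
        (fun h => absurd (Finset.mem_univ _) h)]
    rw [hxz]; exact S.smul_mem _ hzS
  -- antisymmetry
  have hanti : ∀ x y : HV n, br y x = - br x y := by
    have key : br + br.flip = 0 := by
      refine b.ext fun i1 => b.ext fun j1 => ?_
      simp only [LinearMap.add_apply, LinearMap.flip_apply, LinearMap.zero_apply, hb]
      rw [← add_smul]
      have hcoe : ((if (i1:ℕ) % 2 = 0 ∧ (j1:ℕ) = (i1:ℕ) + 1 ∧ (i1:ℕ) < 2*n then (1:ℝ)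
          else if (j1:ℕ) % 2 = 0 ∧ (i1:ℕ) = (j1:ℕ) + 1 ∧ (j1:ℕ) < 2*n then (-1:ℝ) else 0)
          + (if (j1:ℕ) % 2 = 0 ∧ (i1:ℕ) = (j1:ℕ) + 1 ∧ (j1:ℕ) < 2*n then (1:ℝ)
          else if (i1:ℕ) % 2 = 0 ∧ (j1:ℕ) = (i1:ℕ) + 1 ∧ (i1:ℕ) < 2*n then (-1:ℝ) else 0)) = 0 := by
        split_ifs with h1 h2 <;> try norm_num
        all_goals omega
      rw [hcoe, zero_smul]
    intro x y
    have h := LinearMap.congr_fun (LinearMap.congr_fun key x) y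
    simp only [LinearMap.add_apply, LinearMap.flip_apply, LinearMap.zero_apply] at h
    rw [add_comm] at h
    exact eq_neg_of_add_eq_zero_left h
  -- eigenvalue facts
  have hAx : ∀ (i : Fin (k+1)) (x : HV n), x ∈ U i → A x = α i • x := by
    intro i x hx
    exact Module.End.mem_eigenspace_iff.mp (hU i ▸ hx)
  have hABr : ∀ (s t : Fin (k+1)) (x y : HV n), x ∈ U s → y ∈ U t →
      A (br x y) = (α s + α t) • br x y := by
    intro s t x y hx hy
    rw [hA x y, hAx s x hx, hAx t y hy]
    simp only [map_smul, LinearMap.smul_apply, add_smul]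
  -- A z is central, hence A z = μ • z
  have hAzc : ∀ y, br (A z) y = 0 := by
    intro y
    have h := hA z y
    rw [hzr y, map_zero, hzr (A y), add_zero] at h
    exact h.symm
  have hAzS : A z ∈ S := hnd _ hAzc
  set μ : ℝ := φ (A z) with hμdef
  have hAz : A z = μ • z := hrepS _ hAzS
  -- μ is an eigenvalue of A
  have hμeigen : ∃ i0 : Fin (k+1), μ = α i0 := by
    by_contra hc
    push_neg at hc
    have h1 : Disjoint (Module.End.eigenspace A μ)
        (⨆ (ν : ℝ) (_ : ν ≠ μ), Module.End.eigenspace A ν) :=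
      Module.End.eigenspaces_iSupIndep A μ
    have h2 : (⨆ (ν : ℝ) (_ : ν ≠ μ), Module.End.eigenspace A ν) = ⊤ := by
      apply top_unique
      rw [← hUspan]
      refine iSup_le fun i => ?_
      rw [hU i]
      exact le_iSup_of_le (α i)
        (le_iSup (fun _ : α i ≠ μ => Module.End.eigenspace A (α i)) (fun h => hc i h.symm))
    rw [h2] at h1
    have h3 : Module.End.eigenspace A μ = ⊥ := disjoint_top.mp h1
    have hzmem : z ∈ Module.End.eigenspace A μ := Module.End.mem_eigenspace_iff.mpr hAz
    rw [h3] at hzmem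
    exact hzne hzmem
  have hμle : μ ≤ α (Fin.last k) := by
    obtain ⟨i0, h⟩ := hμeigen
    rw [h]
    exact hαmono.monotone (Fin.le_last i0)
  -- decomposition into eigencomponents
  have hdec : ∀ y : HV n, ∃ c : Fin (k+1) → HV n, (∀ t, c t ∈ U t) ∧ y = ∑ t, c t := by
    intro y
    have hy : y ∈ ⨆ i, U i := by rw [hUspan]; exact Submodule.mem_top
    rw [Submodule.mem_iSup_iff_exists_finsupp] at hy
    obtain ⟨f, hf, hs⟩ := hy
    refine ⟨fun t => f t, hf, ?_⟩
    rw [← hs, Finsupp.sum_fintype]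
    exact fun _ => rfl
  -- pairing partner with eigenvalue sum μ
  have hpairμ : ∀ (s : Fin (k+1)) (x : HV n), x ∈ U s → x ∉ S →
      ∃ (t : Fin (k+1)) (y : HV n), y ∈ U t ∧ br x y ≠ 0 ∧ α s + α t = μ := by
    intro s x hxU hxS
    have hxy : ¬ ∀ y, br x y = 0 := fun h => hxS (hnd x h)
    push_neg at hxy
    obtain ⟨y, hy⟩ := hxy
    obtain ⟨c, hc, rfl⟩ := hdec y
    rw [map_sum] at hy
    obtain ⟨t, -, ht⟩ := Finset.exists_ne_zero_of_sum_ne_zero hy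
    refine ⟨t, c t, hc t, ht, ?_⟩
    have h1 := hABr s t x (c t) hxU (hc t)
    have h2 : A (br x (c t)) = μ • br x (c t) := by
      obtain ⟨a, ha⟩ := Submodule.mem_span_singleton.mp (hbS x (c t))
      rw [← ha, map_smul, hAz, smul_comm]
    have h3 : ((α s + α t) - μ) • br x (c t) = 0 := by
      rw [sub_smul, ← h1, ← h2, sub_self]
    rcases smul_eq_zero.mp h3 with h4 | h4
    · linarith [h4]
    · exact absurd h4 ht
  -- e is central
  have heS : e ∈ S := by
    by_contra hc
    obtain ⟨t, y, -, -, hsum⟩ := hpairμ (Fin.last k) e he hc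
    have := hαpos t
    linarith [hμle]
  obtain ⟨γ, hγ⟩ := Submodule.mem_span_singleton.mp heS
  have hγne : γ ≠ 0 := fun h => hene (by rw [← hγ, h, zero_smul])
  have hzU : z ∈ U (Fin.last k) := by
    have hzz : z = γ⁻¹ • e := by rw [← hγ, smul_smul, inv_mul_cancel₀ hγne, one_smul]
    rw [hzz]; exact (U _).smul_mem _ he
  have hμval : μ = α (Fin.last k) := by
    have h1 := hAx _ z hzU
    rw [hAz] at h1
    have h2 : (μ - α (Fin.last k)) • z = 0 := by rw [sub_smul, h1, sub_self]
    rcases smul_eq_zero.mp h2 with h3 | h3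
    · linarith [h3]
    · exact absurd h3 hzne
  -- nonzero eigenvectors off the top eigenspace are not central
  have hne_lastS : ∀ s : Fin (k+1), s ≠ Fin.last k → ∀ x, x ∈ U s → x ≠ 0 → x ∉ S := by
    intro s hs x hxU hxne hxS
    obtain ⟨a, ha⟩ := Submodule.mem_span_singleton.mp hxS
    have hane : a ≠ 0 := fun h => hxne (by rw [← ha, h, zero_smul])
    have hzUs : z ∈ U s := by
      have hzz : z = a⁻¹ • x := by rw [← ha, smul_smul, inv_mul_cancel₀ hane, one_smul]
      rw [hzz]; exact (U s).smul_mem _ hxU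
    have h1 := hAx s z hzUs
    have h2 := hAx _ z hzU
    rw [h1] at h2
    have h3 : (α s - α (Fin.last k)) • z = 0 := by rw [sub_smul, h2, sub_self]
    rcases smul_eq_zero.mp h3 with h4 | h4
    · exact hs (hαmono.injective (by linarith [h4]))
    · exact hzne h4
  -- pairing partner with eigenvalue sum α (last)
  have hpair' : ∀ (s : Fin (k+1)), s ≠ Fin.last k → ∀ x, x ∈ U s → x ≠ 0 →
      ∃ (t : Fin (k+1)) (y : HV n), y ∈ U t ∧ br x y ≠ 0 ∧ α s + α t = α (Fin.last k) := by
    intro s hs x hxU hxne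
    obtain ⟨t, y, h1, h2, h3⟩ := hpairμ s x hxU (hne_lastS s hs x hxU hxne)
    exact ⟨t, y, h1, h2, by rw [← hμval]; exact h3⟩
  -- the pairing involution on indices
  have hkexists : ∀ s : Fin k, ∃ t : Fin k,
      α s.castSucc + α t.castSucc = α (Fin.last k) := by
    intro s
    obtain ⟨x, hxU, hxne⟩ := Submodule.exists_mem_ne_zero_of_ne_bot (hUne s.castSucc)
    obtain ⟨t, y, -, -, hsum⟩ := hpair' s.castSucc (Fin.castSucc_lt_last s).ne x hxU hxne
    have htne : t ≠ Fin.last k := by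
      intro h
      rw [h] at hsum
      have := hαpos s.castSucc
      linarith
    refine ⟨t.castPred htne, ?_⟩
    rwa [Fin.castSucc_castPred]
  choose τ hτ using hkexists
  have hτinv : ∀ s, τ (τ s) = s := by
    intro s
    have h1 := hτ s
    have h2 := hτ (τ s)
    have h3 : α ((τ (τ s)).castSucc) = α s.castSucc := by linarith
    exact Fin.castSucc_injective k (hαmono.injective h3)
  have hτanti : StrictAnti τ := by
    intro a b hab
    have h1 := hτ a
    have h2 := hτ b
    have h3 : α ((τ b).castSucc) < α ((τ a).castSucc) := by
      have := hαmono (Fin.castSucc_lt_castSucc_iff.mpr hab)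
      linarith
    exact Fin.castSucc_lt_castSucc_iff.mp (hαmono.lt_iff_lt.mp h3)
  have hτrev : ∀ s, τ s = s.rev := by
    have instwf : WellFoundedLT (Fin k) := Finite.to_wellFoundedLT
    have hg : StrictMono fun s : Fin k => (τ s).rev := fun a b h => Fin.rev_lt_rev.mpr (hτanti h)
    have hgid : StrictMono (id : Fin k → Fin k) := strictMono_id
    have hr : (fun s : Fin k => (τ s).rev) = id := by
      refine (hg.range_inj hgid).mp ?_
      rw [Set.range_id, Set.range_eq_univ]
      intro t
      refine ⟨τ t.rev, ?_⟩
      show (τ (τ t.rev)).rev = t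
      rw [hτinv, Fin.rev_rev]
    intro s
    have h := congrFun hr s
    simp only [id] at h
    have h2 := congrArg Fin.rev h
    rwa [Fin.rev_rev] at h2
  -- now fix i and j
  intro i j hij h2i
  have hilt : (i:ℕ) < k := by omega
  have hjlt : (j:ℕ) < k := by omega
  have hine : i ≠ Fin.last k := by
    intro h
    have : (i:ℕ) = k := by rw [h]; rfl
    omega
  have hjne : j ≠ Fin.last k := by
    intro h
    have : (j:ℕ) = k := by rw [h]; rfl
    omega
  have hαij : α i + α j = α (Fin.last k) := by
    have h := hτ ⟨(i:ℕ), hilt⟩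
    rw [hτrev] at h
    have h1 : (⟨(i:ℕ), hilt⟩ : Fin k).castSucc = i := by
      apply Fin.ext; simp
    have h2 : ((⟨(i:ℕ), hilt⟩ : Fin k).rev).castSucc = j := by
      apply Fin.ext; simp [Fin.rev]; omega
    rw [h1, h2] at h
    exact h
  -- the representation with e
  have hrepe : ∀ x y : HV n, br x y = (γ⁻¹ * φ (br x y)) • e := by
    intro x y
    conv_lhs => rw [hrep x y]
    rw [← hγ, smul_smul]
    have h1 : γ⁻¹ * φ (br x y) * γ = φ (br x y) := by field_simp
    rw [h1]
  -- the bilinear pairing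
  let B : ↥(U i) →ₗ[ℝ] ↥(U j) →ₗ[ℝ] ℝ :=
    LinearMap.mk₂ ℝ (fun x y => γ⁻¹ * φ (br (x:HV n) (y:HV n)))
      (fun m₁ m₂ y => by simp [mul_add])
      (fun c m y => by simp; ring)
      (fun m y₁ y₂ => by simp [mul_add])
      (fun c m y => by simp; ring)
  have hBapp : ∀ (x : ↥(U i)) (y : ↥(U j)),
      B x y = γ⁻¹ * φ (br (x:HV n) (y:HV n)) := fun x y => rfl
  have hbrB : ∀ (x : ↥(U i)) (y : ↥(U j)), br (x:HV n) (y:HV n) = B x y • e := by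
    intro x y
    rw [hBapp]
    exact hrepe _ _
  -- injectivity on the left
  have hBker : ∀ x : ↥(U i), B x = 0 → x = 0 := by
    intro x hx
    by_contra hxne
    have hxne' : (x : HV n) ≠ 0 := fun h => hxne (by exact_mod_cast Subtype.ext h)
    obtain ⟨t, y, hyU, hbne, hsum⟩ := hpair' i hine (x:HV n) x.2 hxne'
    have htj : t = j := hαmono.injective (by linarith [hαij])
    subst htj
    have h0 : B x ⟨y, hyU⟩ = 0 := by rw [hx]; rfl
    apply hbne
    have h1 := hbrB x ⟨y, hyU⟩
    rw [h0, zero_smul] at h1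
    exact h1
  -- injectivity on the right
  have hBflipker : ∀ y : ↥(U j), (∀ x : ↥(U i), B x y = 0) → y = 0 := by
    intro y hy
    by_contra hyne
    have hyne' : (y : HV n) ≠ 0 := fun h => hyne (by exact_mod_cast Subtype.ext h)
    obtain ⟨t, x', hxU, hbne, hsum⟩ := hpair' j hjne (y:HV n) y.2 hyne'
    have hti : t = i := hαmono.injective (by linarith [hαij])
    subst hti
    apply hbne
    rw [hanti (x' : HV n) ((y : HV n))]
    have h3 : br x' (y:HV n) = 0 := by
      have h4 := hbrB ⟨x', hxU⟩ y
      rw [hy ⟨x', hxU⟩, zero_smul] at h4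
      exact h4
    rw [h3, neg_zero]
  -- injectivity of B and its flip
  have hBinj : Function.Injective B := by
    intro x1 x2 h12
    have h0 : B (x1 - x2) = 0 := by rw [map_sub, h12, sub_self]
    have h1 := hBker _ h0
    rwa [sub_eq_zero] at h1
  have hBflipinj : Function.Injective B.flip := by
    intro y1 y2 h12
    have h0 : B.flip (y1 - y2) = 0 := by rw [map_sub, h12, sub_self]
    have h1 : y1 - y2 = 0 := hBflipker _ (fun x => by
      have h2 := LinearMap.congr_fun h0 x
      simpa using h2)
    rwa [sub_eq_zero] at h1
  -- equality of dimensions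
  have h1 : Module.finrank ℝ ↥(U i) ≤ Module.finrank ℝ (Module.Dual ℝ ↥(U j)) :=
    LinearMap.finrank_le_finrank_of_injective hBinj
  have h2 : Module.finrank ℝ ↥(U j) ≤ Module.finrank ℝ (Module.Dual ℝ ↥(U i)) :=
    LinearMap.finrank_le_finrank_of_injective hBflipinj
  rw [Subspace.dual_finrank_eq] at h1 h2
  have hfinji : Module.finrank ℝ ↥(U j) = Module.finrank ℝ ↥(U i) := by omega
  -- B is bijective
  have hBsurj : Function.Surjective B := by
    have hd : Module.finrank ℝ ↥(U i) = Module.finrank ℝ (Module.Dual ℝ ↥(U j)) := by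
      rw [Subspace.dual_finrank_eq, hfinji]
    exact (LinearMap.injective_iff_surjective_of_finrank_eq_finrank hd).mp hBinj
  let E : ↥(U i) ≃ₗ[ℝ] Module.Dual ℝ ↥(U j) := LinearEquiv.ofBijective B ⟨hBinj, hBsurj⟩
  let cb : Basis (Fin (Module.finrank ℝ ↥(U i))) ℝ ↥(U j) :=
    (Module.finBasis ℝ ↥(U j)).reindex (finCongr hfinji)
  let vb : Basis (Fin (Module.finrank ℝ ↥(U i))) ℝ ↥(U i) := cb.dualBasis.map E.symm
  have hdual : ∀ s t, B (vb s) (cb t) = if s = t then 1 else 0 := by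
    intro s t
    have hE : B (vb s) = cb.dualBasis s := by
      have h0 : E (vb s) = cb.dualBasis s := by
        show E (E.symm (cb.dualBasis s)) = cb.dualBasis s
        exact E.apply_symm_apply _
      exact h0
    rw [hE, Basis.dualBasis_apply_self]
    by_cases h : s = t
    · simp [h]
    · simp [h, Ne.symm h]
  refine ⟨hfinji, fun s => ((vb s : ↥(U i)) : HV n), fun t => ((cb t : ↥(U j)) : HV n),
    fun s => (vb s).2, fun t => (cb t).2, ?_, ?_, ?_, ?_, ?_⟩
  · exact vb.linearIndependent.map' (U i).subtype (Submodule.ker_subtype _)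
  · calc Submodule.span ℝ (Set.range fun s => ((vb s : ↥(U i)) : HV n))
        = Submodule.map (U i).subtype (Submodule.span ℝ (Set.range vb)) := by
          rw [Submodule.map_span, ← Set.range_comp]; rfl
      _ = Submodule.map (U i).subtype ⊤ := by rw [vb.span_eq]
      _ = U i := Submodule.map_subtype_top _
  · exact cb.linearIndependent.map' (U j).subtype (Submodule.ker_subtype _)
  · calc Submodule.span ℝ (Set.range fun t => ((cb t : ↥(U j)) : HV n))
        = Submodule.map (U j).subtype (Submodule.span ℝ (Set.range cb)) := by
          rw [Submodule.map_span, ← Set.range_comp]; rfl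
      _ = Submodule.map (U j).subtype ⊤ := by rw [cb.span_eq]
      _ = U j := Submodule.map_subtype_top _
  · intro s t
    rw [hbrB (vb s) (cb t), hdual]
end
end
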